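/- For all integers k ≥ 2 and r ≥ 1, no (2k+1)-tetrahedron T ∈ 𝒯_k admits a graph homomorphism into the Andrásfai graph A_{k,r}. -/

import Mathlib

/-- The generalised Andrásfai graph `A_{k,r}`. -/
def andrasfai (k r : ℕ) : SimpleGraph (Fin ((2*k-1)*(r-1)+2)) :=
  SimpleGraph.fromRel fun i j =>
    (((k : ℚ) - 1) / (2 * k - 1) <
        (min (((i.val : ℤ) - (j.val : ℤ)).natAbs)
            ((2*k-1)*(r-1)+2 - ((i.val : ℤ) - (j.val : ℤ)).natAbs) : ℚ) /
          ((2*k-1)*(r-1)+2)) ∧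
    ((min (((i.val : ℤ) - (j.val : ℤ)).natAbs)
            ((2*k-1)*(r-1)+2 - ((i.val : ℤ) - (j.val : ℤ)).natAbs) : ℚ) /
          ((2*k-1)*(r-1)+2) < (k : ℚ) / (2 * k - 1))

namespace TetraNoHom

open SimpleGraph Walk

lemma rat_bounds (k r : ℕ) (hk : 2 ≤ k) (hr : 1 ≤ r) (D : ℕ)
    (h1 : ((k:ℚ)-1)/(2*(k:ℚ)-1) <
      ((D:ℚ) ⊓ ((2*(k:ℚ)-1)*((r:ℚ)-1)+2 - (D:ℚ))) / ((2*(k:ℚ)-1)*((r:ℚ)-1)+2)) :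
    ((k:ℤ)-1)*((r:ℤ)-1)+1 ≤ (D:ℤ) ∧
      ((k:ℤ)-1)*((r:ℤ)-1)+1 ≤ ((((2*k-1)*(r-1)+2 : ℕ)):ℤ) - (D:ℤ) := by
  have hkQ : (2:ℚ) ≤ (k:ℚ) := by exact_mod_cast hk
  have hrQ : (1:ℚ) ≤ (r:ℚ) := by exact_mod_cast hr
  have hden : (0:ℚ) < 2*(k:ℚ)-1 := by linarith
  have hNq : (0:ℚ) < (2*(k:ℚ)-1)*((r:ℚ)-1)+2 := by nlinarith
  rw [div_lt_div_iff₀ hden hNq] at h1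
  have hmin1 : ((D:ℚ) ⊓ ((2*(k:ℚ)-1)*((r:ℚ)-1)+2 - (D:ℚ))) ≤ (D:ℚ) := min_le_left _ _
  have hmin2 : ((D:ℚ) ⊓ ((2*(k:ℚ)-1)*((r:ℚ)-1)+2 - (D:ℚ))) ≤
      (2*(k:ℚ)-1)*((r:ℚ)-1)+2 - (D:ℚ) := min_le_right _ _
  have hD : ((k:ℚ)-1) * ((2*(k:ℚ)-1)*((r:ℚ)-1)+2) < (D:ℚ) * (2*(k:ℚ)-1) :=
    lt_of_lt_of_le h1 (mul_le_mul_of_nonneg_right hmin1 (le_of_lt hden))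
  have hND : ((k:ℚ)-1) * ((2*(k:ℚ)-1)*((r:ℚ)-1)+2) <
      ((2*(k:ℚ)-1)*((r:ℚ)-1)+2 - (D:ℚ)) * (2*(k:ℚ)-1) :=
    lt_of_lt_of_le h1 (mul_le_mul_of_nonneg_right hmin2 (le_of_lt hden))
  have hNZcast : ((((2*k-1)*(r-1)+2 : ℕ)):ℤ) = (2*(k:ℤ)-1)*((r:ℤ)-1)+2 := by
    have e1 : ((2*k-1 : ℕ) : ℤ) = 2*(k:ℤ)-1 := by omega
    have e2 : ((r-1 : ℕ) : ℤ) = (r:ℤ)-1 := by omega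
    push_cast [← e1, ← e2]
    ring
  constructor
  · have key : ((k:ℚ)-1)*((r:ℚ)-1)+1 < (D:ℚ) + 1 := by nlinarith
    have key' : ((k:ℤ)-1)*((r:ℤ)-1)+1 < (D:ℤ) + 1 := by exact_mod_cast key
    linarith
  · have key : ((k:ℚ)-1)*((r:ℚ)-1)+1 <
        ((2*(k:ℚ)-1)*((r:ℚ)-1)+2 - (D:ℚ)) + 1 := by nlinarith
    have key' : ((k:ℤ)-1)*((r:ℤ)-1)+1 <
        ((2*(k:ℤ)-1)*((r:ℤ)-1)+2 - (D:ℤ)) + 1 := by exact_mod_cast key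
    rw [hNZcast]
    linarith

lemma cast_N (k r : ℕ) (hk : 2 ≤ k) (hr : 1 ≤ r) :
    ((((2*k-1)*(r-1)+2 : ℕ)):ℤ) = (2*(k:ℤ)-1)*((r:ℤ)-1)+2 := by
  have e1 : ((2*k-1 : ℕ) : ℤ) = 2*(k:ℤ)-1 := by omega
  have e2 : ((r-1 : ℕ) : ℤ) = (r:ℤ)-1 := by omega
  push_cast [← e1, ← e2]
  ring

lemma adj_step (k r : ℕ) (hk : 2 ≤ k) (hr : 1 ≤ r)
    {x y : Fin ((2*k-1)*(r-1)+2)} (h : (andrasfai k r).Adj x y) :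
    ((k:ℤ)-1) * ((r:ℤ)-1) + 1 ≤ ((y.val:ℤ) - (x.val:ℤ)) % (((2*k-1)*(r-1)+2 : ℕ) : ℤ) ∧
      ((y.val:ℤ) - (x.val:ℤ)) % (((2*k-1)*(r-1)+2 : ℕ) : ℤ) ≤ (k:ℤ) * ((r:ℤ)-1) + 1 := by
  have hK : (2:ℤ) ≤ (k:ℤ) := by exact_mod_cast hk
  have hR : (1:ℤ) ≤ (r:ℤ) := by exact_mod_cast hr
  have hNZcast := cast_N k r hk hr
  set N : ℤ := (((2*k-1)*(r-1)+2 : ℕ) : ℤ) with hNdef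
  set Q : ℤ := ((k:ℤ)-1) * ((r:ℤ)-1) + 1 with hQdef
  have hQ1 : 1 ≤ Q := by nlinarith
  have hNQ : N = 2*Q + ((r:ℤ)-1) := by rw [hNZcast, hQdef]; ring
  rw [andrasfai, SimpleGraph.fromRel_adj] at h
  obtain ⟨hne, h⟩ := h
  have hsym : ∃ D : ℕ, ((y.val:ℤ) - (x.val:ℤ) = (D:ℤ) ∨ (y.val:ℤ) - (x.val:ℤ) = -(D:ℤ)) ∧
      Q ≤ (D:ℤ) ∧ Q ≤ N - (D:ℤ) := by
    rcases h with ⟨h1, _⟩ | ⟨h1, _⟩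
    · refine ⟨((x.val:ℤ) - (y.val:ℤ)).natAbs, ?_, rat_bounds k r hk hr _ h1⟩
      rcases Int.natAbs_eq ((x.val:ℤ) - (y.val:ℤ)) with hE | hE <;> omega
    · refine ⟨((y.val:ℤ) - (x.val:ℤ)).natAbs, ?_, rat_bounds k r hk hr _ h1⟩
      rcases Int.natAbs_eq ((y.val:ℤ) - (x.val:ℤ)) with hE | hE <;> omega
  obtain ⟨D, hD, hQD, hQND⟩ := hsym
  rcases hD with hE | hE
  · rw [hE, Int.emod_eq_of_lt (by linarith) (by linarith)]
    exact ⟨hQD, by linarith⟩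
  · have hDpos : 0 < (D:ℤ) := by linarith
    have hmod : (-(D:ℤ)) % N = N - (D:ℤ) := by
      have h1 : (-(D:ℤ) + N * 1) % N = (-(D:ℤ)) % N := Int.add_mul_emod_self_left ..
      rw [← h1, show (-(D:ℤ) + N*1) = N - (D:ℤ) by ring]
      exact Int.emod_eq_of_lt (by linarith) (by linarith)
    rw [hE, hmod]
    exact ⟨hQND, by linarith⟩

section WSum

variable {k r : ℕ} {V : Type} {T : SimpleGraph V} (f : T →g andrasfai k r)

def wsum {u v : V} (W : T.Walk u v) : ℤ :=
  (W.darts.map (fun d => (((f d.toProd.2).val : ℤ) - ((f d.toProd.1).val : ℤ)) %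
    (((2*k-1)*(r-1)+2 : ℕ) : ℤ))).sum

lemma wsum_nil {u : V} : wsum f (Walk.nil : T.Walk u u) = 0 := rfl

lemma wsum_cons {u v w : V} (h : T.Adj u v) (p : T.Walk v w) :
    wsum f (Walk.cons h p) = (((f v).val : ℤ) - ((f u).val : ℤ)) %
      (((2*k-1)*(r-1)+2 : ℕ) : ℤ) + wsum f p := by
  simp [wsum, Walk.darts_cons]

lemma wsum_append {u v w : V} (p : T.Walk u v) (q : T.Walk v w) :
    wsum f (p.append q) = wsum f p + wsum f q := by
  simp [wsum, Walk.darts_append]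

lemma step_bounds (hk : 2 ≤ k) (hr : 1 ≤ r) {u v : V} (h : T.Adj u v) :
    ((k:ℤ)-1) * ((r:ℤ)-1) + 1 ≤
      (((f v).val : ℤ) - ((f u).val : ℤ)) % (((2*k-1)*(r-1)+2 : ℕ) : ℤ) ∧
    (((f v).val : ℤ) - ((f u).val : ℤ)) % (((2*k-1)*(r-1)+2 : ℕ) : ℤ) ≤
      (k:ℤ) * ((r:ℤ)-1) + 1 :=
  adj_step k r hk hr (f.map_adj h)

lemma step_rev (hk : 2 ≤ k) (hr : 1 ≤ r) {u v : V} (h : T.Adj u v) :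
    (((f v).val : ℤ) - ((f u).val : ℤ)) % (((2*k-1)*(r-1)+2 : ℕ) : ℤ) +
    (((f u).val : ℤ) - ((f v).val : ℤ)) % (((2*k-1)*(r-1)+2 : ℕ) : ℤ) =
      (((2*k-1)*(r-1)+2 : ℕ) : ℤ) := by
  have hK : (2:ℤ) ≤ (k:ℤ) := by exact_mod_cast hk
  have hR : (1:ℤ) ≤ (r:ℤ) := by exact_mod_cast hr
  have hNZcast := cast_N k r hk hr
  set N : ℤ := (((2*k-1)*(r-1)+2 : ℕ) : ℤ) with hNdef
  obtain ⟨hl1, hu1⟩ := step_bounds f hk hr h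
  obtain ⟨hl2, hu2⟩ := step_bounds f hk hr h.symm
  set a : ℤ := ((f u).val : ℤ)
  set b : ℤ := ((f v).val : ℤ)
  have hQpos : (0:ℤ) < ((k:ℤ)-1) * ((r:ℤ)-1) + 1 := by nlinarith
  have hQN : ((k:ℤ)-1) * ((r:ℤ)-1) + 1 + ((k:ℤ) * ((r:ℤ)-1) + 1) = N := by
    rw [hNZcast]; ring
  have hNpos : (0:ℤ) < N := by rw [hNZcast]; nlinarith
  have hsum0 : ((b - a) % N + (a - b) % N) % N = 0 := by
    rw [← Int.add_emod]
    simp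
  set s : ℤ := (b - a) % N + (a - b) % N with hs
  have hspos : 0 < s := by rw [hs]; linarith
  have hslt : s < 2 * N := by rw [hs]; linarith
  have hdiv : N * (s / N) + s % N = s := Int.mul_ediv_add_emod s N
  rw [hsum0] at hdiv
  set q : ℤ := s / N with hq
  have hq1 : q = 1 := by
    rcases lt_trichotomy q 1 with h' | h' | h'
    · have hq0 : q ≤ 0 := by omega
      have : N * q ≤ 0 := mul_nonpos_of_nonneg_of_nonpos (le_of_lt hNpos) hq0
      omega
    · exact h'
    · have hq2 : 2 ≤ q := by omega
      have : N * 2 ≤ N * q := mul_le_mul_of_nonneg_left hq2 (le_of_lt hNpos)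
      omega
  rw [hq1] at hdiv
  omega

lemma wsum_reverse (hk : 2 ≤ k) (hr : 1 ≤ r) {u v : V} (W : T.Walk u v) :
    wsum f W.reverse = (W.length : ℤ) * (((2*k-1)*(r-1)+2 : ℕ) : ℤ) - wsum f W := by
  induction W with
  | nil => simp [wsum]
  | cons h p ih =>
    rw [Walk.reverse_cons, wsum_append, wsum_cons, wsum_cons, wsum_nil, ih]
    have := step_rev f hk hr h
    have hlc : ((p.length + 1 : ℕ):ℤ) = (p.length:ℤ)+1 := by push_cast; ring
    rw [Walk.length_cons, hlc]
    linarith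

lemma wsum_bounds (hk : 2 ≤ k) (hr : 1 ≤ r) {u v : V} (W : T.Walk u v) :
    (W.length : ℤ) * (((k:ℤ)-1) * ((r:ℤ)-1) + 1) ≤ wsum f W ∧
      wsum f W ≤ (W.length : ℤ) * ((k:ℤ) * ((r:ℤ)-1) + 1) := by
  induction W with
  | nil => simp [wsum]
  | cons h p ih =>
    obtain ⟨ih1, ih2⟩ := ih
    obtain ⟨h1, h2⟩ := step_bounds f hk hr h
    have hlc : ((p.length + 1 : ℕ):ℤ) = (p.length:ℤ)+1 := by push_cast; ring
    rw [wsum_cons, Walk.length_cons, hlc]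
    constructor <;> nlinarith

lemma wsum_mod {u v : V} (W : T.Walk u v) :
    wsum f W % (((2*k-1)*(r-1)+2 : ℕ) : ℤ) =
      (((f v).val : ℤ) - ((f u).val : ℤ)) % (((2*k-1)*(r-1)+2 : ℕ) : ℤ) := by
  set N : ℤ := (((2*k-1)*(r-1)+2 : ℕ) : ℤ) with hNdef
  induction W with
  | nil => simp [wsum]
  | cons h p ih =>
    rw [wsum_cons]
    rw [Int.add_emod, Int.emod_emod_of_dvd _ dvd_rfl, ih, ← Int.add_emod]
    congr 1
    ring

lemma wsum_closed {O : V} (W : T.Walk O O) :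
    (((2*k-1)*(r-1)+2 : ℕ) : ℤ) ∣ wsum f W := by
  apply Int.dvd_of_emod_eq_zero
  rw [wsum_mod]
  simp

end WSum

/-! integer endgame -/

lemma zrange (K Tt m : ℤ) (hK : 2 ≤ K) (hT : 0 ≤ Tt)
    (h1 : (2*K+1) * ((K-1)*Tt+1) ≤ ((2*K-1)*Tt+2) * m)
    (h2 : ((2*K-1)*Tt+2) * m ≤ (2*K+1) * (K*Tt+1)) :
    m = K ∨ m = K+1 := by
  by_contra hcon
  push_neg at hcon
  have hN0 : (0:ℤ) ≤ (2*K-1)*Tt+2 := by nlinarith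
  have hKT : (0:ℤ) ≤ (K-1)*Tt := mul_nonneg (by linarith) hT
  rcases (by omega : m ≤ K - 1 ∨ K + 2 ≤ m) with h | h
  · have h3 : ((2*K-1)*Tt+2) * m ≤ ((2*K-1)*Tt+2) * (K-1) :=
      mul_le_mul_of_nonneg_left h hN0
    nlinarith
  · have h3 : ((2*K-1)*Tt+2) * (K+2) ≤ ((2*K-1)*Tt+2) * m :=
      mul_le_mul_of_nonneg_left h hN0
    nlinarith

lemma zpair (K Tt p m : ℤ) (hK : 2 ≤ K) (hT : 0 ≤ Tt) (hp : 2 ≤ p)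
    (hm : m = K ∨ m = K+1)
    (hlow : (2*(2*K+1) - 2*p) * ((K-1)*Tt+1) ≤ ((2*K-1)*Tt+2) * (2*m - p))
    (hhigh : ((2*K-1)*Tt+2) * (2*m - p) ≤ (2*(2*K+1) - 2*p) * (K*Tt+1)) :
    False := by
  have hpt : 2*Tt ≤ p*Tt := mul_le_mul_of_nonneg_right hp hT
  rcases hm with rfl | rfl
  · nlinarith
  · nlinarith

lemma zmain (K Tt p1 p2 p3 a1 a2 a3 m1 m2 m3 : ℤ)
    (hK : 2 ≤ K) (hT : 0 ≤ Tt)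
    (hp1 : 2 ≤ p1) (hp2 : 2 ≤ p2) (hp3 : 2 ≤ p3)
    (hL1 : p1 + a1 + p2 = 2*K+1) (hL2 : p2 + a2 + p3 = 2*K+1)
    (hL3 : p3 + a3 + p1 = 2*K+1)
    (hb1l : (p1+a1+p2) * ((K-1)*Tt+1) ≤ ((2*K-1)*Tt+2) * m1)
    (hb1h : ((2*K-1)*Tt+2) * m1 ≤ (p1+a1+p2) * (K*Tt+1))
    (hb2l : (p2+a2+p3) * ((K-1)*Tt+1) ≤ ((2*K-1)*Tt+2) * m2)
    (hb2h : ((2*K-1)*Tt+2) * m2 ≤ (p2+a2+p3) * (K*Tt+1))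
    (hb3l : (p3+a3+p1) * ((K-1)*Tt+1) ≤ ((2*K-1)*Tt+2) * m3)
    (hb3h : ((2*K-1)*Tt+2) * m3 ≤ (p3+a3+p1) * (K*Tt+1))
    (hw12l : (p1+a1+a2+p3) * ((K-1)*Tt+1) ≤ ((2*K-1)*Tt+2) * (m1+m2-p2))
    (hw12h : ((2*K-1)*Tt+2) * (m1+m2-p2) ≤ (p1+a1+a2+p3) * (K*Tt+1))
    (hw23l : (p2+a2+a3+p1) * ((K-1)*Tt+1) ≤ ((2*K-1)*Tt+2) * (m2+m3-p3))
    (hw23h : ((2*K-1)*Tt+2) * (m2+m3-p3) ≤ (p2+a2+a3+p1) * (K*Tt+1))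
    (hw31l : (p3+a3+a1+p2) * ((K-1)*Tt+1) ≤ ((2*K-1)*Tt+2) * (m3+m1-p1))
    (hw31h : ((2*K-1)*Tt+2) * (m3+m1-p1) ≤ (p3+a3+a1+p2) * (K*Tt+1)) :
    False := by
  rw [hL1] at hb1l hb1h
  rw [hL2] at hb2l hb2h
  rw [hL3] at hb3l hb3h
  have e1 := zrange K Tt m1 hK hT hb1l hb1h
  have e2 := zrange K Tt m2 hK hT hb2l hb2h
  have e3 := zrange K Tt m3 hK hT hb3l hb3h
  have hq : m1 = m2 ∨ m2 = m3 ∨ m3 = m1 := by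
    rcases e1 with h1 | h1 <;> rcases e2 with h2 | h2 <;> rcases e3 with h3 | h3 <;> omega
  rcases hq with h | h | h
  · have hll : p1+a1+a2+p3 = 2*(2*K+1) - 2*p2 := by linarith
    have hmm : m1+m2-p2 = 2*m1-p2 := by omega
    rw [hll, hmm] at hw12l hw12h
    exact zpair K Tt p2 m1 hK hT hp2 e1 hw12l hw12h
  · have hll : p2+a2+a3+p1 = 2*(2*K+1) - 2*p3 := by linarith
    have hmm : m2+m3-p3 = 2*m2-p3 := by omega
    rw [hll, hmm] at hw23l hw23h
    exact zpair K Tt p3 m2 hK hT hp3 e2 hw23l hw23h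
  · have hll : p3+a3+a1+p2 = 2*(2*K+1) - 2*p1 := by linarith
    have hmm : m3+m1-p1 = 2*m3-p1 := by omega
    rw [hll, hmm] at hw31l hw31h
    exact zpair K Tt p1 m3 hK hT hp1 e3 hw31l hw31h

end TetraNoHom

/-! ### Walk combinatorics -/
namespace TetraNoHom2
open SimpleGraph Walk

section Walks

variable {V : Type} {T : SimpleGraph V}

lemma start_not_mem_support_tail {u v : V} {P : T.Walk u v} (hP : P.IsPath) :
    u ∉ P.support.tail := by
  have hnd := hP.support_nodup
  rw [Walk.support_eq_cons P] at hnd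
  exact (List.nodup_cons.mp hnd).1

lemma edge_len {u v : V} (P : T.Walk u v) (hP : P.IsPath) (he : s(u,v) ∈ P.edges) :
    P.length = 1 := by
  cases P with
  | nil => simp at he
  | @cons _ m _ h p =>
    rw [Walk.edges_cons] at he
    obtain ⟨hp', hu⟩ := (Walk.cons_isPath_iff h p).mp hP
    rcases List.mem_cons.mp he with he1 | he2
    · rcases Sym2.eq_iff.mp he1 with ⟨-, hvm⟩ | ⟨hum, -⟩
      · subst hvm
        have hnil := Walk.isPath_iff_eq_nil.mp hp'
        subst hnil
        simp
      · exact absurd hum h.ne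
    · exact absurd (Walk.fst_mem_support_of_mem_edges p he2) hu

lemma append_isPath {u v w : V} (P : T.Walk u v) (Q : T.Walk v w)
    (hP : P.IsPath) (hQ : Q.IsPath)
    (hint : ∀ x, x ∈ P.support → x ∈ Q.support → x = v) :
    (P.append Q).IsPath := by
  rw [Walk.isPath_def, Walk.support_append]
  refine List.Nodup.append hP.support_nodup
    ((List.tail_sublist _).nodup hQ.support_nodup) ?_
  intro x hx1 hx2
  have hxv := hint x hx1 (List.mem_of_mem_tail hx2)
  subst hxv
  exact start_not_mem_support_tail hQ hx2

lemma append_isCycle {u v : V} (P : T.Walk u v) (Q : T.Walk v u)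
    (hP : P.IsPath) (hQ : Q.IsPath) (huv : u ≠ v) (hQ2 : 2 ≤ Q.length)
    (hint : ∀ x, x ∈ P.support → x ∈ Q.support → x = u ∨ x = v) :
    (P.append Q).IsCycle := by
  refine ⟨⟨⟨?_⟩, ?_⟩, ?_⟩
  · rw [Walk.edges_append]
    refine List.Nodup.append hP.isTrail.edges_nodup hQ.isTrail.edges_nodup ?_
    intro e he1 he2
    induction e using Sym2.ind with
    | _ s t =>
      have hs1 : s ∈ P.support := Walk.fst_mem_support_of_mem_edges P he1
      have ht1 : t ∈ P.support := Walk.snd_mem_support_of_mem_edges P he1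
      have hs2 : s ∈ Q.support := Walk.fst_mem_support_of_mem_edges Q he2
      have ht2 : t ∈ Q.support := Walk.snd_mem_support_of_mem_edges Q he2
      have hst : s ≠ t :=
        ((SimpleGraph.mem_edgeSet T).mp (P.edges_subset_edgeSet he1)).ne
      rcases hint s hs1 hs2 with rfl | rfl <;> rcases hint t ht1 ht2 with rfl | rfl
      · exact hst rfl
      · have := edge_len Q hQ (by rwa [Sym2.eq_swap] at he2)
        omega
      · have := edge_len Q hQ he2
        omega
      · exact hst rfl
  · intro hnil
    have hlen := congrArg Walk.length hnil
    rw [Walk.length_append] at hlen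
    simp only [Walk.length_nil] at hlen
    omega
  · have htail : (P.append Q).support.tail = P.support.tail ++ Q.support.tail := by
      rw [Walk.support_append, Walk.support_eq_cons P, List.cons_append, List.tail_cons,
        List.tail_cons]
    rw [htail]
    refine List.Nodup.append ((List.tail_sublist _).nodup hP.support_nodup)
      ((List.tail_sublist _).nodup hQ.support_nodup) ?_
    intro x hx1 hx2
    rcases hint x (List.mem_of_mem_tail hx1) (List.mem_of_mem_tail hx2) with rfl | rfl
    · exact start_not_mem_support_tail hP hx1
    · exact start_not_mem_support_tail hQ hx2

lemma tail_split [DecidableEq V] {a b c : V} (p : T.Walk a b) (hc : c ∈ p.support) :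
    p.support.tail = (p.takeUntil c hc).support.tail ++ (p.dropUntil c hc).support.tail := by
  have h1 : p.support = (p.takeUntil c hc).support ++ (p.dropUntil c hc).support.tail := by
    rw [← Walk.support_append, Walk.take_spec]
  have h2 := congrArg List.tail h1
  rw [Walk.support_eq_cons (p.takeUntil c hc), List.cons_append, List.tail_cons] at h2
  rw [Walk.support_eq_cons p, List.tail_cons] at h2
  exact h2

lemma support_split [DecidableEq V] {a b c : V} (p : T.Walk a b) (hc : c ∈ p.support) :
    p.support = (p.takeUntil c hc).support ++ (p.dropUntil c hc).support.tail := by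
  rw [← Walk.support_append, Walk.take_spec]

end Walks

end TetraNoHom2

namespace TetraNoHom
open SimpleGraph Walk

lemma core2 (k r : ℕ) (hk : 2 ≤ k) (hr : 1 ≤ r) {V : Type} {T : SimpleGraph V}
    (f : T →g andrasfai k r) (x y w z : V)
    (Px : T.Walk x z) (Py : T.Walk y z) (Pw : T.Walk w z)
    (Axy : T.Walk x y) (Ayw : T.Walk y w) (Awx : T.Walk w x)
    (hPx : Px.IsPath) (hPy : Py.IsPath) (hPw : Pw.IsPath)
    (hPx2 : 2 ≤ Px.length) (hPy2 : 2 ≤ Py.length) (hPw2 : 2 ≤ Pw.length)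
    (hAxy : Axy.IsPath) (hAyw : Ayw.IsPath) (hAwx : Awx.IsPath)
    (hPxPy : ∀ u, u ∈ Px.support → u ∈ Py.support → u = z)
    (hPxPw : ∀ u, u ∈ Px.support → u ∈ Pw.support → u = z)
    (hPyPw : ∀ u, u ∈ Py.support → u ∈ Pw.support → u = z)
    (hPxAxy : ∀ u, u ∈ Px.support → u ∈ Axy.support → u = x)
    (hPxAwx : ∀ u, u ∈ Px.support → u ∈ Awx.support → u = x)
    (hPyAxy : ∀ u, u ∈ Py.support → u ∈ Axy.support → u = y)
    (hPyAyw : ∀ u, u ∈ Py.support → u ∈ Ayw.support → u = y)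
    (hPwAyw : ∀ u, u ∈ Pw.support → u ∈ Ayw.support → u = w)
    (hPwAwx : ∀ u, u ∈ Pw.support → u ∈ Awx.support → u = w)
    (hxAyw : x ∉ Ayw.support) (hyAwx : y ∉ Awx.support) (hwAxy : w ∉ Axy.support)
    (hzAxy : z ∉ Axy.support) (hzAyw : z ∉ Ayw.support) (hzAwx : z ∉ Awx.support)
    (hlen' : ∀ (v : V) (W : T.Walk v v), W.IsCycle → z ∈ W.support →
      ((x ∈ W.support ∧ y ∈ W.support ∧ w ∉ W.support) ∨
       (x ∈ W.support ∧ w ∈ W.support ∧ y ∉ W.support) ∨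
       (y ∈ W.support ∧ w ∈ W.support ∧ x ∉ W.support)) → W.length = 2*k+1) :
    False := by
  have hxz : x ≠ z := fun h => hzAxy (by rw [← h]; exact Axy.start_mem_support)
  have hyz : y ≠ z := fun h => hzAyw (by rw [← h]; exact Ayw.start_mem_support)
  have hwz : w ≠ z := fun h => hzAwx (by rw [← h]; exact Awx.start_mem_support)
  -- the three cycles through z
  have hP1 : (Px.reverse.append Axy).IsPath := by
    refine TetraNoHom2.append_isPath _ _ hPx.reverse hAxy ?_
    intro u hu hA
    rw [Walk.support_reverse, List.mem_reverse] at hu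
    exact hPxAxy u hu hA
  have hQ1cyc : ((Px.reverse.append Axy).append Py).IsCycle := by
    refine TetraNoHom2.append_isCycle _ _ hP1 hPy (Ne.symm hyz) hPy2 ?_
    intro u hu hQy
    rw [Walk.mem_support_append_iff] at hu
    rcases hu with hu | hu
    · rw [Walk.support_reverse, List.mem_reverse] at hu
      exact Or.inl (hPxPy u hu hQy)
    · exact Or.inr (hPyAxy u hQy hu)
  have hP2 : (Py.reverse.append Ayw).IsPath := by
    refine TetraNoHom2.append_isPath _ _ hPy.reverse hAyw ?_
    intro u hu hA
    rw [Walk.support_reverse, List.mem_reverse] at hu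
    exact hPyAyw u hu hA
  have hQ2cyc : ((Py.reverse.append Ayw).append Pw).IsCycle := by
    refine TetraNoHom2.append_isCycle _ _ hP2 hPw (Ne.symm hwz) hPw2 ?_
    intro u hu hQw
    rw [Walk.mem_support_append_iff] at hu
    rcases hu with hu | hu
    · rw [Walk.support_reverse, List.mem_reverse] at hu
      exact Or.inl (hPyPw u hu hQw)
    · exact Or.inr (hPwAyw u hQw hu)
  have hP3 : (Pw.reverse.append Awx).IsPath := by
    refine TetraNoHom2.append_isPath _ _ hPw.reverse hAwx ?_
    intro u hu hA
    rw [Walk.support_reverse, List.mem_reverse] at hu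
    exact hPwAwx u hu hA
  have hQ3cyc : ((Pw.reverse.append Awx).append Px).IsCycle := by
    refine TetraNoHom2.append_isCycle _ _ hP3 hPx (Ne.symm hxz) hPx2 ?_
    intro u hu hQx
    rw [Walk.mem_support_append_iff] at hu
    rcases hu with hu | hu
    · rw [Walk.support_reverse, List.mem_reverse] at hu
      exact Or.inl (hPxPw u hQx hu)
    · exact Or.inr (hPxAwx u hQx hu)
  -- memberships
  have hx1 : x ∈ ((Px.reverse.append Axy).append Py).support := by
    rw [Walk.mem_support_append_iff, Walk.mem_support_append_iff]
    refine Or.inl (Or.inl ?_)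
    rw [Walk.support_reverse, List.mem_reverse]
    exact Px.start_mem_support
  have hy1 : y ∈ ((Px.reverse.append Axy).append Py).support := by
    rw [Walk.mem_support_append_iff]
    exact Or.inr Py.start_mem_support
  have hw1 : w ∉ ((Px.reverse.append Axy).append Py).support := by
    intro hw'
    rw [Walk.mem_support_append_iff, Walk.mem_support_append_iff] at hw'
    rcases hw' with (hw' | hw') | hw'
    · rw [Walk.support_reverse, List.mem_reverse] at hw'
      exact hwz (hPxPw w hw' Pw.start_mem_support)
    · exact hwAxy hw'
    · exact hwz (hPyPw w hw' Pw.start_mem_support)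
  have hy2 : y ∈ ((Py.reverse.append Ayw).append Pw).support := by
    rw [Walk.mem_support_append_iff, Walk.mem_support_append_iff]
    refine Or.inl (Or.inl ?_)
    rw [Walk.support_reverse, List.mem_reverse]
    exact Py.start_mem_support
  have hw2 : w ∈ ((Py.reverse.append Ayw).append Pw).support := by
    rw [Walk.mem_support_append_iff]
    exact Or.inr Pw.start_mem_support
  have hx2 : x ∉ ((Py.reverse.append Ayw).append Pw).support := by
    intro hx'
    rw [Walk.mem_support_append_iff, Walk.mem_support_append_iff] at hx'
    rcases hx' with (hx' | hx') | hx'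
    · rw [Walk.support_reverse, List.mem_reverse] at hx'
      exact hxz (hPxPy x Px.start_mem_support hx')
    · exact hxAyw hx'
    · exact hxz (hPxPw x Px.start_mem_support hx')
  have hw3 : w ∈ ((Pw.reverse.append Awx).append Px).support := by
    rw [Walk.mem_support_append_iff, Walk.mem_support_append_iff]
    refine Or.inl (Or.inl ?_)
    rw [Walk.support_reverse, List.mem_reverse]
    exact Pw.start_mem_support
  have hx3 : x ∈ ((Pw.reverse.append Awx).append Px).support := by
    rw [Walk.mem_support_append_iff]
    exact Or.inr Px.start_mem_support
  have hy3 : y ∉ ((Pw.reverse.append Awx).append Px).support := by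
    intro hy'
    rw [Walk.mem_support_append_iff, Walk.mem_support_append_iff] at hy'
    rcases hy' with (hy' | hy') | hy'
    · rw [Walk.support_reverse, List.mem_reverse] at hy'
      exact hyz (hPyPw y Py.start_mem_support hy')
    · exact hyAwx hy'
    · exact hyz (hPxPy y hy' Py.start_mem_support)
  -- lengths from hlen'
  have hlen1 := hlen' z _ hQ1cyc (Walk.start_mem_support _) (Or.inl ⟨hx1, hy1, hw1⟩)
  have hlen2 := hlen' z _ hQ2cyc (Walk.start_mem_support _) (Or.inr (Or.inr ⟨hy2, hw2, hx2⟩))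
  have hlen3 := hlen' z _ hQ3cyc (Walk.start_mem_support _) (Or.inr (Or.inl ⟨hx3, hw3, hy3⟩))
  rw [Walk.length_append, Walk.length_append, Walk.length_reverse] at hlen1 hlen2 hlen3
  -- integer data
  have hK : (2:ℤ) ≤ (k:ℤ) := by exact_mod_cast hk
  have hR : (1:ℤ) ≤ (r:ℤ) := by exact_mod_cast hr
  have hNZ := cast_N k r hk hr
  obtain ⟨m1, hm1⟩ := wsum_closed f ((Px.reverse.append Axy).append Py)
  obtain ⟨m2, hm2⟩ := wsum_closed f ((Py.reverse.append Ayw).append Pw)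
  obtain ⟨m3, hm3⟩ := wsum_closed f ((Pw.reverse.append Awx).append Px)
  have hB1 := wsum_bounds f hk hr ((Px.reverse.append Axy).append Py)
  have hB2 := wsum_bounds f hk hr ((Py.reverse.append Ayw).append Pw)
  have hB3 := wsum_bounds f hk hr ((Pw.reverse.append Awx).append Px)
  have hB12 := wsum_bounds f hk hr (((Px.reverse.append Axy).append Ayw).append Pw)
  have hB23 := wsum_bounds f hk hr (((Py.reverse.append Ayw).append Awx).append Px)
  have hB31 := wsum_bounds f hk hr (((Pw.reverse.append Awx).append Axy).append Py)
  -- length casts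
  have hlenQ1 : (((Px.reverse.append Axy).append Py).length : ℤ)
      = (Px.length:ℤ) + (Axy.length:ℤ) + (Py.length:ℤ) := by
    rw [Walk.length_append, Walk.length_append, Walk.length_reverse]; push_cast; ring
  have hlenQ2 : (((Py.reverse.append Ayw).append Pw).length : ℤ)
      = (Py.length:ℤ) + (Ayw.length:ℤ) + (Pw.length:ℤ) := by
    rw [Walk.length_append, Walk.length_append, Walk.length_reverse]; push_cast; ring
  have hlenQ3 : (((Pw.reverse.append Awx).append Px).length : ℤ)
      = (Pw.length:ℤ) + (Awx.length:ℤ) + (Px.length:ℤ) := by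
    rw [Walk.length_append, Walk.length_append, Walk.length_reverse]; push_cast; ring
  have hlenW12 : ((((Px.reverse.append Axy).append Ayw).append Pw).length : ℤ)
      = (Px.length:ℤ) + (Axy.length:ℤ) + (Ayw.length:ℤ) + (Pw.length:ℤ) := by
    rw [Walk.length_append, Walk.length_append, Walk.length_append, Walk.length_reverse]
    push_cast; ring
  have hlenW23 : ((((Py.reverse.append Ayw).append Awx).append Px).length : ℤ)
      = (Py.length:ℤ) + (Ayw.length:ℤ) + (Awx.length:ℤ) + (Px.length:ℤ) := by
    rw [Walk.length_append, Walk.length_append, Walk.length_append, Walk.length_reverse]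
    push_cast; ring
  have hlenW31 : ((((Pw.reverse.append Awx).append Axy).append Py).length : ℤ)
      = (Pw.length:ℤ) + (Awx.length:ℤ) + (Axy.length:ℤ) + (Py.length:ℤ) := by
    rw [Walk.length_append, Walk.length_append, Walk.length_append, Walk.length_reverse]
    push_cast; ring
  -- wsum values of the combined walks
  have hval12 : wsum f (((Px.reverse.append Axy).append Ayw).append Pw)
      = ((((2*k-1)*(r-1)+2 : ℕ)):ℤ) * (m1 + m2 - (Py.length:ℤ)) := by
    have e1 : wsum f ((Px.reverse.append Axy).append Py)
        = wsum f Px.reverse + wsum f Axy + wsum f Py := by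
      rw [wsum_append, wsum_append]
    have e2 : wsum f ((Py.reverse.append Ayw).append Pw)
        = wsum f Py.reverse + wsum f Ayw + wsum f Pw := by
      rw [wsum_append, wsum_append]
    have e3 : wsum f (((Px.reverse.append Axy).append Ayw).append Pw)
        = wsum f Px.reverse + wsum f Axy + wsum f Ayw + wsum f Pw := by
      rw [wsum_append, wsum_append, wsum_append]
    have e4 := wsum_reverse f hk hr Py
    rw [e1] at hm1
    rw [e2] at hm2
    rw [e3]
    linarith [hm1, hm2, e4]
  have hval23 : wsum f (((Py.reverse.append Ayw).append Awx).append Px)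
      = ((((2*k-1)*(r-1)+2 : ℕ)):ℤ) * (m2 + m3 - (Pw.length:ℤ)) := by
    have e1 : wsum f ((Py.reverse.append Ayw).append Pw)
        = wsum f Py.reverse + wsum f Ayw + wsum f Pw := by
      rw [wsum_append, wsum_append]
    have e2 : wsum f ((Pw.reverse.append Awx).append Px)
        = wsum f Pw.reverse + wsum f Awx + wsum f Px := by
      rw [wsum_append, wsum_append]
    have e3 : wsum f (((Py.reverse.append Ayw).append Awx).append Px)
        = wsum f Py.reverse + wsum f Ayw + wsum f Awx + wsum f Px := by
      rw [wsum_append, wsum_append, wsum_append]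
    have e4 := wsum_reverse f hk hr Pw
    rw [e1] at hm2
    rw [e2] at hm3
    rw [e3]
    linarith [hm2, hm3, e4]
  have hval31 : wsum f (((Pw.reverse.append Awx).append Axy).append Py)
      = ((((2*k-1)*(r-1)+2 : ℕ)):ℤ) * (m3 + m1 - (Px.length:ℤ)) := by
    have e1 : wsum f ((Pw.reverse.append Awx).append Px)
        = wsum f Pw.reverse + wsum f Awx + wsum f Px := by
      rw [wsum_append, wsum_append]
    have e2 : wsum f ((Px.reverse.append Axy).append Py)
        = wsum f Px.reverse + wsum f Axy + wsum f Py := by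
      rw [wsum_append, wsum_append]
    have e3 : wsum f (((Pw.reverse.append Awx).append Axy).append Py)
        = wsum f Pw.reverse + wsum f Awx + wsum f Axy + wsum f Py := by
      rw [wsum_append, wsum_append, wsum_append]
    have e4 := wsum_reverse f hk hr Px
    rw [e1] at hm3
    rw [e2] at hm1
    rw [e3]
    linarith [hm3, hm1, e4]
  -- assemble zmain inputs
  refine zmain (k:ℤ) ((r:ℤ)-1) (Px.length:ℤ) (Py.length:ℤ) (Pw.length:ℤ)
    (Axy.length:ℤ) (Ayw.length:ℤ) (Awx.length:ℤ) m1 m2 m3 hK (by linarith)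
    (by exact_mod_cast hPx2) (by exact_mod_cast hPy2) (by exact_mod_cast hPw2)
    (by exact_mod_cast hlen1) (by exact_mod_cast hlen2) (by exact_mod_cast hlen3)
    ?_ ?_ ?_ ?_ ?_ ?_ ?_ ?_ ?_ ?_ ?_ ?_
  · rw [← hlenQ1, ← hNZ, ← hm1]; exact hB1.1
  · rw [← hlenQ1, ← hNZ, ← hm1]; exact hB1.2
  · rw [← hlenQ2, ← hNZ, ← hm2]; exact hB2.1
  · rw [← hlenQ2, ← hNZ, ← hm2]; exact hB2.2
  · rw [← hlenQ3, ← hNZ, ← hm3]; exact hB3.1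
  · rw [← hlenQ3, ← hNZ, ← hm3]; exact hB3.2
  · rw [← hlenW12, ← hNZ, ← hval12]; exact hB12.1
  · rw [← hlenW12, ← hNZ, ← hval12]; exact hB12.2
  · rw [← hlenW23, ← hNZ, ← hval23]; exact hB23.1
  · rw [← hlenW23, ← hNZ, ← hval23]; exact hB23.2
  · rw [← hlenW31, ← hNZ, ← hval31]; exact hB31.1
  · rw [← hlenW31, ← hNZ, ← hval31]; exact hB31.2

end TetraNoHom


/-- `T` is a `(2k+1)`-tetrahedron (a member of `𝒯_k`): it consists of a cycle `C` with three
branch vertices `a, b, c`, a center vertex `z`, and three internally vertex-disjoint spokes of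
length at least `2` joining the branch vertices to `z`, such that every cycle containing `z`
and exactly two of the branch vertices has length `2k+1`. -/
structure TetraStructure (k : ℕ) {V : Type} (T : SimpleGraph V) where
  a : V
  b : V
  c : V
  z : V
  C : T.Walk a a
  Pa : T.Walk a z
  Pb : T.Walk b z
  Pc : T.Walk c z
  hC : C.IsCycle
  hb : b ∈ C.support
  hc : c ∈ C.support
  hab : a ≠ b
  hac : a ≠ c
  hbc : b ≠ c
  hz : z ∉ C.support
  hPa : Pa.IsPath
  hPb : Pb.IsPath
  hPc : Pc.IsPath
  hPa2 : 2 ≤ Pa.length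
  hPb2 : 2 ≤ Pb.length
  hPc2 : 2 ≤ Pc.length
  hPaPb : ∀ x, x ∈ Pa.support → x ∈ Pb.support → x = z
  hPaPc : ∀ x, x ∈ Pa.support → x ∈ Pc.support → x = z
  hPbPc : ∀ x, x ∈ Pb.support → x ∈ Pc.support → x = z
  hPaC : ∀ x, x ∈ Pa.support → x ∈ C.support → x = a
  hPbC : ∀ x, x ∈ Pb.support → x ∈ C.support → x = b
  hPcC : ∀ x, x ∈ Pc.support → x ∈ C.support → x = c
  hV : ∀ x : V, x ∈ C.support ∨ x ∈ Pa.support ∨ x ∈ Pb.support ∨ x ∈ Pc.support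
  hE : ∀ e : Sym2 V, e ∈ T.edgeSet ↔
    (e ∈ C.edges ∨ e ∈ Pa.edges ∨ e ∈ Pb.edges ∨ e ∈ Pc.edges)
  hlen : ∀ (v : V) (w : T.Walk v v), w.IsCycle → z ∈ w.support →
    ((a ∈ w.support ∧ b ∈ w.support ∧ c ∉ w.support) ∨
     (a ∈ w.support ∧ c ∈ w.support ∧ b ∉ w.support) ∨
     (b ∈ w.support ∧ c ∈ w.support ∧ a ∉ w.support)) → w.length = 2*k+1

namespace XMain
open SimpleGraph Walk TetraNoHom TetraNoHom2

theorem aux (k r : ℕ) (hk : 2 ≤ k) (hr : 1 ≤ r)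
    {V : Type} (T : SimpleGraph V) (hT : Nonempty (TetraStructure k T)) :
    IsEmpty (T →g andrasfai k r) := by
  refine ⟨fun f => ?_⟩
  obtain ⟨S⟩ := hT
  haveI : DecidableEq V := Classical.decEq V
  obtain ⟨a, b, c, z, C, Pa, Pb, Pc, hC, hb, hc, hab, hac, hbc, hz, hPa, hPb, hPc,
    hPa2, hPb2, hPc2, hPaPb, hPaPc, hPbPc, hPaC, hPbC, hPcC, hV, hE, hlen⟩ := S
  -- split the cycle at b
  have hCt : C.support.tail
      = (C.takeUntil b hb).support.tail ++ (C.dropUntil b hb).support.tail :=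
    tail_split C hb
  have hCsupp : C.support
      = (C.takeUntil b hb).support ++ (C.dropUntil b hb).support.tail :=
    support_split C hb
  have hCnd : ((C.takeUntil b hb).support.tail ++ (C.dropUntil b hb).support.tail).Nodup := by
    rw [← hCt]; exact hC.support_nodup
  obtain ⟨htknd, hdknd, hdisj⟩ := List.nodup_append.mp hCnd
  have haind : a ∈ (C.dropUntil b hb).support.tail := by
    have h1 := (C.dropUntil b hb).end_mem_support
    rw [Walk.support_eq_cons (C.dropUntil b hb)] at h1
    exact (List.mem_cons.mp h1).resolve_left hab
  have hanotk : a ∉ (C.takeUntil b hb).support.tail := fun h => hdisj _ h _ haind rfl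
  have htkpath : (C.takeUntil b hb).IsPath := by
    rw [Walk.isPath_def, Walk.support_eq_cons (C.takeUntil b hb)]
    exact List.nodup_cons.mpr ⟨hanotk, htknd⟩
  have hbintk : b ∈ (C.takeUntil b hb).support.tail := by
    have h1 := (C.takeUntil b hb).end_mem_support
    rw [Walk.support_eq_cons (C.takeUntil b hb)] at h1
    exact (List.mem_cons.mp h1).resolve_left (Ne.symm hab)
  have hbnodk : b ∉ (C.dropUntil b hb).support.tail := fun h => hdisj _ hbintk _ h rfl
  have hdkpath : (C.dropUntil b hb).IsPath := by
    rw [Walk.isPath_def, Walk.support_eq_cons (C.dropUntil b hb)]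
    exact List.nodup_cons.mpr ⟨hbnodk, hdknd⟩
  have hztk : z ∉ (C.takeUntil b hb).support :=
    fun h => hz (Walk.support_takeUntil_subset C hb h)
  have hzdk : z ∉ (C.dropUntil b hb).support :=
    fun h => hz (Walk.support_dropUntil_subset C hb h)
  by_cases hcase : c ∈ (C.dropUntil b hb).support
  · -- cyclic order a, b, c
    have hcindkt : c ∈ (C.dropUntil b hb).support.tail := by
      have h1 := hcase
      rw [Walk.support_eq_cons (C.dropUntil b hb)] at h1
      exact (List.mem_cons.mp h1).resolve_left (Ne.symm hbc)
    have hcnotk : c ∉ (C.takeUntil b hb).support := by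
      intro h
      rw [Walk.support_eq_cons (C.takeUntil b hb)] at h
      rcases List.mem_cons.mp h with h' | h'
      · exact hac (h'.symm)
      · exact hdisj _ h' _ hcindkt rfl
    have hdkt : (C.dropUntil b hb).support.tail
        = ((C.dropUntil b hb).takeUntil c hcase).support.tail
          ++ ((C.dropUntil b hb).dropUntil c hcase).support.tail :=
      tail_split (C.dropUntil b hb) hcase
    have hdknd2 : (((C.dropUntil b hb).takeUntil c hcase).support.tail
        ++ ((C.dropUntil b hb).dropUntil c hcase).support.tail).Nodup := by
      rw [← hdkt]; exact hdknd
    obtain ⟨hβnd, hγnd, hdisj2⟩ := List.nodup_append.mp hdknd2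
    have hβpath := hdkpath.takeUntil hcase
    have hγpath := hdkpath.dropUntil hcase
    have hainγt : a ∈ ((C.dropUntil b hb).dropUntil c hcase).support.tail := by
      have h1 := ((C.dropUntil b hb).dropUntil c hcase).end_mem_support
      rw [Walk.support_eq_cons ((C.dropUntil b hb).dropUntil c hcase)] at h1
      exact (List.mem_cons.mp h1).resolve_left hac
    have haβ : a ∉ ((C.dropUntil b hb).takeUntil c hcase).support := by
      intro h
      rw [Walk.support_eq_cons ((C.dropUntil b hb).takeUntil c hcase)] at h
      rcases List.mem_cons.mp h with h' | h'
      · exact hab h'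
      · exact hdisj2 _ h' _ hainγt rfl
    have hbγ : b ∉ ((C.dropUntil b hb).dropUntil c hcase).support := by
      intro h
      rw [Walk.support_eq_cons ((C.dropUntil b hb).dropUntil c hcase)] at h
      rcases List.mem_cons.mp h with h' | h'
      · exact hbc h'
      · exact hbnodk (by rw [hdkt]; exact List.mem_append_right _ h')
    have hβsub : ((C.dropUntil b hb).takeUntil c hcase).support ⊆ C.support :=
      fun u hu => Walk.support_dropUntil_subset C hb
        (Walk.support_takeUntil_subset (C.dropUntil b hb) hcase hu)
    have hγsub : ((C.dropUntil b hb).dropUntil c hcase).support ⊆ C.support :=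
      fun u hu => Walk.support_dropUntil_subset C hb
        (Walk.support_dropUntil_subset (C.dropUntil b hb) hcase hu)
    have htksub : (C.takeUntil b hb).support ⊆ C.support :=
      Walk.support_takeUntil_subset C hb
    exact core2 k r hk hr f a b c z Pa Pb Pc
      (C.takeUntil b hb) ((C.dropUntil b hb).takeUntil c hcase)
      ((C.dropUntil b hb).dropUntil c hcase)
      hPa hPb hPc hPa2 hPb2 hPc2 htkpath hβpath hγpath
      hPaPb hPaPc hPbPc
      (fun u h1 h2 => hPaC u h1 (htksub h2))
      (fun u h1 h2 => hPaC u h1 (hγsub h2))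
      (fun u h1 h2 => hPbC u h1 (htksub h2))
      (fun u h1 h2 => hPbC u h1 (hβsub h2))
      (fun u h1 h2 => hPcC u h1 (hβsub h2))
      (fun u h1 h2 => hPcC u h1 (hγsub h2))
      haβ hbγ hcnotk
      hztk (fun h => hz (hβsub h)) (fun h => hz (hγsub h))
      hlen
  · -- cyclic order a, c, b
    have hcintk : c ∈ (C.takeUntil b hb).support := by
      have h1 := hc
      rw [hCsupp] at h1
      rcases List.mem_append.mp h1 with h' | h'
      · exact h'
      · exact absurd (List.mem_of_mem_tail h') hcase
    have htkt : (C.takeUntil b hb).support.tail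
        = ((C.takeUntil b hb).takeUntil c hcintk).support.tail
          ++ ((C.takeUntil b hb).dropUntil c hcintk).support.tail :=
      tail_split (C.takeUntil b hb) hcintk
    have htknd2 : (((C.takeUntil b hb).takeUntil c hcintk).support.tail
        ++ ((C.takeUntil b hb).dropUntil c hcintk).support.tail).Nodup := by
      rw [← htkt]; exact htknd
    obtain ⟨hA1nd, hA2nd, hdisj2⟩ := List.nodup_append.mp htknd2
    have hA1path := htkpath.takeUntil hcintk
    have hA2path := htkpath.dropUntil hcintk
    have hbinA2t : b ∈ ((C.takeUntil b hb).dropUntil c hcintk).support.tail := by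
      have h1 := ((C.takeUntil b hb).dropUntil c hcintk).end_mem_support
      rw [Walk.support_eq_cons ((C.takeUntil b hb).dropUntil c hcintk)] at h1
      exact (List.mem_cons.mp h1).resolve_left hbc
    have hbA1 : b ∉ ((C.takeUntil b hb).takeUntil c hcintk).support := by
      intro h
      rw [Walk.support_eq_cons ((C.takeUntil b hb).takeUntil c hcintk)] at h
      rcases List.mem_cons.mp h with h' | h'
      · exact hab h'.symm
      · exact hdisj2 _ h' _ hbinA2t rfl
    have haA2 : a ∉ ((C.takeUntil b hb).dropUntil c hcintk).support := by
      intro h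
      rw [Walk.support_eq_cons ((C.takeUntil b hb).dropUntil c hcintk)] at h
      rcases List.mem_cons.mp h with h' | h'
      · exact hac h'
      · exact hanotk (by rw [htkt]; exact List.mem_append_right _ h')
    have hA1sub : ((C.takeUntil b hb).takeUntil c hcintk).support ⊆ C.support :=
      fun u hu => Walk.support_takeUntil_subset C hb
        (Walk.support_takeUntil_subset (C.takeUntil b hb) hcintk hu)
    have hA2sub : ((C.takeUntil b hb).dropUntil c hcintk).support ⊆ C.support :=
      fun u hu => Walk.support_takeUntil_subset C hb
        (Walk.support_dropUntil_subset (C.takeUntil b hb) hcintk hu)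
    have hdksub : (C.dropUntil b hb).support ⊆ C.support :=
      Walk.support_dropUntil_subset C hb
    exact core2 k r hk hr f a c b z Pa Pc Pb
      ((C.takeUntil b hb).takeUntil c hcintk)
      ((C.takeUntil b hb).dropUntil c hcintk)
      (C.dropUntil b hb)
      hPa hPc hPb hPa2 hPc2 hPb2 hA1path hA2path hdkpath
      hPaPc hPaPb (fun u h1 h2 => hPbPc u h2 h1)
      (fun u h1 h2 => hPaC u h1 (hA1sub h2))
      (fun u h1 h2 => hPaC u h1 (hdksub h2))
      (fun u h1 h2 => hPcC u h1 (hA1sub h2))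
      (fun u h1 h2 => hPcC u h1 (hA2sub h2))
      (fun u h1 h2 => hPbC u h1 (hA2sub h2))
      (fun u h1 h2 => hPbC u h1 (hdksub h2))
      haA2 hcase hbA1
      (fun h => hz (hA1sub h)) (fun h => hz (hA2sub h)) hzdk
      (fun v W h1 h2 h3 => hlen v W h1 h2 (by tauto))

end XMain

/-- For all integers `k ≥ 2` and `r ≥ 1`, no `(2k+1)`-tetrahedron `T ∈ 𝒯_k` admits a graph
homomorphism into the Andrásfai graph `A_{k,r}`. -/
theorem tetra_not_hom_andrasfai (k r : ℕ) (hk : 2 ≤ k) (hr : 1 ≤ r)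
    {V : Type} (T : SimpleGraph V) (hT : Nonempty (TetraStructure k T)) :
    IsEmpty (T →g andrasfai k r) :=
  XMain.aux k r hk hr T hT
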